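/- arXiv:2006.02124 — 2 statements merged into one kernel-verified Lean document; each statement's English description precedes it below -/
import Mathlib

section
/- Let G be a graph and t ≥ 2 an integer, and let P_t be the path graph on t vertices. If v is a leaf of P_t, then γ_I(G∘_v P_t) = n(G)·⌈(t+1)/2⌉ when t is odd, and γ_I(G∘_v P_t) = n(G)·⌈t/2⌉ + γ(G) when t is even. Furthermore, if v is a non-leaf vertex of P_t, then γ_I(G∘_v P_t) = n(G)·⌈(t+1)/2⌉. -/
open Finset

open scoped Classical

/-- An Italian dominating function on a finite simple graph: values in {0,1,2} and
every vertex with value 0 has neighbour values summing to at least 2. -/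
noncomputable def IsIDF {α : Type*} [Fintype α] (G : SimpleGraph α) (f : α → ℕ) : Prop :=
  (∀ u, f u ≤ 2) ∧
    ∀ u, f u = 0 → 2 ≤ ∑ w ∈ Finset.univ.filter (fun w => G.Adj u w), f w

/-- The Italian domination number γ_I(G). -/
noncomputable def italianNumber {α : Type*} [Fintype α] (G : SimpleGraph α) : ℕ :=
  sInf {n | ∃ f : α → ℕ, IsIDF G f ∧ ∑ u, f u = n}

/-- A γ_I(G)-function: an IDF on G of minimum weight. -/
noncomputable def IsMinIDF {α : Type*} [Fintype α] (G : SimpleGraph α) (f : α → ℕ) : Prop :=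
  IsIDF G f ∧ ∑ u, f u = italianNumber G

/-- D is a dominating set of G. -/
def IsDomSet {α : Type*} (G : SimpleGraph α) (D : Set α) : Prop :=
  ∀ u ∉ D, ∃ w ∈ D, G.Adj u w

/-- The domination number γ(G). -/
noncomputable def dominationNumber {α : Type*} [Fintype α] (G : SimpleGraph α) : ℕ :=
  sInf {n | ∃ D : Finset α, IsDomSet G ↑D ∧ D.card = n}

/-- The degree of a vertex. -/
noncomputable def deg {α : Type*} [Fintype α] (G : SimpleGraph α) (u : α) : ℕ :=
  (Finset.univ.filter (fun w => G.Adj u w)).card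

/-- The rooted product G∘_v H: one copy of H for each vertex of G, the root v of the
x-th copy being identified with the vertex x of G. The pair (x, y) is the vertex y of
the x-th copy of H; in particular (x, v) is the vertex x of G. -/
def rootedProd {α β : Type*} (G : SimpleGraph α) (H : SimpleGraph β) (v : β) :
    SimpleGraph (α × β) where
  Adj p q := (p.1 = q.1 ∧ H.Adj p.2 q.2) ∨ (p.2 = v ∧ q.2 = v ∧ G.Adj p.1 q.1)
  symm := by
    constructor
    rintro ⟨x, y⟩ ⟨x', y'⟩ (⟨h1, h2⟩ | ⟨h1, h2, h3⟩)
    · exact Or.inl ⟨h1.symm, h2.symm⟩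
    · exact Or.inr ⟨h2, h1, h3.symm⟩
  loopless := by
    constructor
    rintro ⟨x, y⟩ (⟨_, h⟩ | ⟨_, _, h⟩)
    · exact H.loopless.irrefl _ h
    · exact G.loopless.irrefl _ h

/-- The weight ω(f_x) of the restriction of f to the copy H_x. -/
def copyWeight {α β : Type*} [Fintype β] (f : α × β → ℕ) (x : α) : ℕ :=
  ∑ y, f (x, y)

/-- The graph H − {v} obtained from H by deleting the vertex v. -/
def deleteVertex {β : Type*} (H : SimpleGraph β) (v : β) : SimpleGraph {w : β // w ≠ v} :=
  SimpleGraph.induce {w : β | w ≠ v} H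


namespace Stmt17Aux

def S (f : ℕ → ℕ) (m : ℕ) : ℕ := ∑ j ∈ Finset.range m, f j

def prv (f : ℕ → ℕ) (j : ℕ) : ℕ := if j = 0 then 0 else f (j-1)

/-- right-relaxed IDF conditions on `[0, m)` : condition at every index except `m-1`. -/
def HR (f : ℕ → ℕ) (m : ℕ) : Prop := ∀ j, j + 1 < m → f j = 0 → 2 ≤ prv f j + f (j+1)

/-- left-relaxed conditions -/
def HL (f : ℕ → ℕ) (m : ℕ) : Prop :=
  ∀ j, 1 ≤ j → j < m → f j = 0 → 2 ≤ f (j-1) + (if j + 1 < m then f (j+1) else 0)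

lemma S_succ (f : ℕ → ℕ) (k : ℕ) : S f (k+1) = S f k + f k := Finset.sum_range_succ f k

lemma HR_mono {f : ℕ → ℕ} {m m' : ℕ} (h : HR f m) (hm : m' ≤ m) : HR f m' :=
  fun j hj h0 => h j (lt_of_lt_of_le hj hm) h0

lemma core1 (m : ℕ) : ∀ f : ℕ → ℕ, 2 ≤ m → HR f m → m + f (m-1) ≤ 2 * S f m := by
  induction m using Nat.strong_induction_on with
  | _ m ih =>
  intro f hm hH
  obtain ⟨k, rfl⟩ : ∃ k, m = k + 2 := ⟨m - 2, by omega⟩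
  rw [show k + 2 - 1 = k + 1 by omega]
  have hS2 : S f (k+2) = S f (k+1) + f (k+1) := S_succ f (k+1)
  rcases Nat.eq_zero_or_pos k with hk | hk
  · subst hk
    have h0 := hH 0 (by norm_num)
    rw [prv, if_pos rfl] at h0
    norm_num at h0 hS2 ⊢
    have hS1 : S f 1 = f 0 := by simp [S]
    rw [show S f (0+1) = S f 1 from rfl, hS1] at hS2
    rcases Nat.eq_zero_or_pos (f 0) with h | h
    · have := h0 h; omega
    · omega
  · -- m = k + 2, k ≥ 1
    have hIH1 : (k+1) + f k ≤ 2 * S f (k+1) := by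
      have := ih (k+1) (by omega) f (by omega) (HR_mono hH (by omega))
      rwa [show k + 1 - 1 = k by omega] at this
    rcases Nat.eq_zero_or_pos (f k + f (k+1)) with hz | hpos
    · -- f k = 0 and f (k+1) = 0
      have hfk : f k = 0 := by omega
      have hfk1 : f (k+1) = 0 := by omega
      have hc := hH k (by omega) hfk
      rw [prv, if_neg (by omega), hfk1] at hc
      have hS1 : S f (k+1) = S f k + f k := S_succ f k
      rcases Nat.lt_or_ge k 2 with hk1 | hk1
      · -- k = 1, m = 3 : f 0 ≥ 2
        have hk' : k = 1 := by omega
        subst hk'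
        norm_num at hc
        have hS0 : S f 1 = f 0 := by simp [S]
        rw [show S f (1+1) = S f (1+1) from rfl] at hS1
        have : S f (1+1) = f 0 + f 1 := by rw [hS1, hS0]
        omega
      · -- k ≥ 2
        have hIH2 : k + f (k-1) ≤ 2 * S f k := by
          have := ih k (by omega) f (by omega) (HR_mono hH (by omega))
          exact this
        omega
    · omega

lemma core2 {m : ℕ} {f : ℕ → ℕ} (hm : 3 ≤ m) (hH : HR f m) (hc : 2 ≤ f (m-1)) :
    m + 3 ≤ 2 * S f m := by
  have h1 : (m-1) + f (m-1-1) ≤ 2 * S f (m-1) :=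
    core1 (m-1) f (by omega) (HR_mono hH (by omega))
  have hs : S f m = S f (m-1) + f (m-1) := by
    have := S_succ f (m-1)
    rwa [show m - 1 + 1 = m by omega] at this
  omega

lemma fullEven {k : ℕ} {f : ℕ → ℕ} (hk : 2 ≤ k) (hke : k % 2 = 0) (hH : HR f k)
    (hend : f (k-1) = 0 → 2 ≤ prv f (k-1)) : k + 2 ≤ 2 * S f k := by
  rcases Nat.eq_zero_or_pos (f (k-1)) with h0 | h1
  · have h2 := hend h0
    rw [prv, if_neg (by omega)] at h2
    rcases Nat.lt_or_ge k 4 with h4 | h4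
    · -- k = 2
      have hk2 : k = 2 := by omega
      subst hk2
      norm_num at h0 h2
      have hs : S f 2 = f 0 + f 1 := by simp [S, Finset.sum_range_succ]
      omega
    · have hco := core2 (m := k - 1) (f := f) (by omega) (HR_mono hH (by omega))
        (by rwa [show k - 1 - 1 = k - 2 by omega])
      have hs : S f k = S f (k-1) + f (k-1) := by
        have := S_succ f (k-1); rwa [show k - 1 + 1 = k by omega] at this
      omega
  · have := core1 k f hk hH
    omega

lemma S_reflect (f : ℕ → ℕ) (m : ℕ) : S (fun j => f (m - 1 - j)) m = S f m :=
  Finset.sum_range_reflect f m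

lemma revHL {f : ℕ → ℕ} {m : ℕ} (h : HL f m) : HR (fun j => f (m - 1 - j)) m := by
  intro j hj h0
  have hi := h (m - 1 - j) (by omega) (by omega) h0
  show 2 ≤ (if j = 0 then 0 else f (m - 1 - (j-1))) + f (m - 1 - (j+1))
  rw [show m - 1 - j - 1 = m - 1 - (j+1) by omega] at hi
  by_cases hlt : m - 1 - j + 1 < m
  · rw [if_pos hlt] at hi
    rw [if_neg (by omega), show m - 1 - (j - 1) = m - 1 - j + 1 by omega]
    omega
  · rw [if_neg hlt] at hi
    rw [if_pos (by omega)]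
    omega

lemma core1L {m : ℕ} {f : ℕ → ℕ} (hm : 2 ≤ m) (hH : HL f m) : m + f 0 ≤ 2 * S f m := by
  have := core1 m (fun j => f (m - 1 - j)) hm (revHL hH)
  rw [S_reflect] at this
  simpa [show m - 1 - (m-1) = 0 by omega] using this

lemma core2L {m : ℕ} {f : ℕ → ℕ} (hm : 3 ≤ m) (hH : HL f m) (hc : 2 ≤ f 0) :
    m + 3 ≤ 2 * S f m := by
  have := core2 (m := m) (f := fun j => f (m - 1 - j)) hm (revHL hH)
    (by simpa [show m - 1 - (m-1) = 0 by omega] using hc)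
  rwa [S_reflect] at this

lemma fullEvenL {k : ℕ} {f : ℕ → ℕ} (hk : 2 ≤ k) (hke : k % 2 = 0) (hH : HL f k)
    (hend : f 0 = 0 → 2 ≤ f 1) : k + 2 ≤ 2 * S f k := by
  have := fullEven (k := k) (f := fun j => f (k - 1 - j)) hk hke (revHL hH) ?_
  · rwa [S_reflect] at this
  · intro h0
    rw [prv, if_neg (by omega)]
    simp only [show k - 1 - (k-1) = 0 by omega] at h0
    have e : k - 1 - (k - 1 - 1) = 1 := by omega
    simp only [e]
    exact hend h0

end Stmt17Aux

namespace Stmt17Aux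
open Finset

section Graphs
variable {α : Type*} [Fintype α] {t : ℕ}

/-- restriction of f to copy x, as an ℕ-sequence -/
def FF (f : α × Fin t → ℕ) (x : α) : ℕ → ℕ := fun n => if h : n < t then f (x, ⟨n, h⟩) else 0

omit [Fintype α] in
lemma FF_app (f : α × Fin t → ℕ) (x : α) (j : Fin t) : FF f x j.1 = f (x, j) := by
  simp [FF, j.isLt]

omit [Fintype α] in
lemma pathSum (f : α × Fin t → ℕ) (x : α) (j : Fin t) :
    ∑ k ∈ univ.filter (fun k => (SimpleGraph.pathGraph t).Adj j k), f (x, k)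
      = prv (FF f x) j.1 + FF f x (j.1 + 1) := by
  rw [Finset.sum_filter]
  have key : ∀ k : Fin t, (if (SimpleGraph.pathGraph t).Adj j k then f (x, k) else 0)
      = (if k.1 + 1 = j.1 then f (x, k) else 0) + (if j.1 + 1 = k.1 then f (x, k) else 0) := by
    intro k
    by_cases h1 : k.1 + 1 = j.1
    · rw [if_pos h1, if_neg (show ¬ (j.1 + 1 = k.1) by omega),
        if_pos (SimpleGraph.pathGraph_adj.2 (Or.inr h1))]
      exact (Nat.add_zero _).symm
    · by_cases h2 : j.1 + 1 = k.1
      · rw [if_neg h1, if_pos h2, if_pos (SimpleGraph.pathGraph_adj.2 (Or.inl h2))]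
        exact (Nat.zero_add _).symm
      · rw [if_neg h1, if_neg h2,
          if_neg (fun h => by rcases SimpleGraph.pathGraph_adj.1 h with h | h <;> omega)]
  simp only [key]
  rw [Finset.sum_add_distrib]
  congr 1
  · by_cases hj : j.1 = 0
    · rw [Finset.sum_eq_zero (fun k _ => if_neg (by omega)), prv, if_pos hj]
    · have hlt : j.1 - 1 < t := by omega
      have hcond : ∀ k : Fin t, (k.1 + 1 = j.1) = (k = ⟨j.1 - 1, hlt⟩) := by
        intro k; apply propext; rw [Fin.ext_iff]; simp only; omega
      simp only [hcond]
      rw [Finset.sum_ite_eq' univ (⟨j.1 - 1, hlt⟩ : Fin t) (fun k => f (x, k)),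
        if_pos (mem_univ _), prv, if_neg hj, FF, dif_pos hlt]
  · by_cases hlt : j.1 + 1 < t
    · have hcond : ∀ k : Fin t, (j.1 + 1 = k.1) = (k = ⟨j.1 + 1, hlt⟩) := by
        intro k; apply propext; rw [Fin.ext_iff]; simp only; omega
      simp only [hcond]
      rw [Finset.sum_ite_eq' univ (⟨j.1 + 1, hlt⟩ : Fin t) (fun k => f (x, k)),
        if_pos (mem_univ _), FF, dif_pos hlt]
    · rw [Finset.sum_eq_zero (fun k _ => if_neg (fun h => by have := k.isLt; omega)),
        FF, dif_neg hlt]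

variable (G : SimpleGraph α)

omit [Fintype α] in
lemma rootedProd_adj {β : Type*} (H : SimpleGraph β) (v : β) (p q : α × β) :
    (rootedProd G H v).Adj p q ↔
      (p.1 = q.1 ∧ H.Adj p.2 q.2) ∨ (p.2 = v ∧ q.2 = v ∧ G.Adj p.1 q.1) := Iff.rfl

lemma copySum (f : α × Fin t → ℕ) (v : Fin t) (x : α) (j : Fin t) (hj : j ≠ v) :
    ∑ w ∈ univ.filter (fun w => (rootedProd G (SimpleGraph.pathGraph t) v).Adj (x, j) w), f w
      = prv (FF f x) j.1 + FF f x (j.1 + 1) := by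
  rw [Finset.sum_filter, Fintype.sum_prod_type]
  rw [Finset.sum_eq_single x (fun y _ hyx => Finset.sum_eq_zero (fun k _ => by
      rw [if_neg]; rw [rootedProd_adj]; rintro (⟨e, _⟩ | ⟨e, _, _⟩); exact hyx e.symm; exact hj e))
    (fun h => absurd (mem_univ x) h)]
  have : ∀ k : Fin t, ((rootedProd G (SimpleGraph.pathGraph t) v).Adj (x, j) (x, k))
      = ((SimpleGraph.pathGraph t).Adj j k) := by
    intro k; apply propext
    rw [rootedProd_adj]
    constructor
    · rintro (⟨_, h⟩ | ⟨_, _, h⟩); exact h; exact absurd h (G.irrefl)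
    · exact fun h => Or.inl ⟨rfl, h⟩
  simp only [this]
  rw [← Finset.sum_filter, pathSum]

lemma rootSum (f : α × Fin t → ℕ) (v : Fin t) (x : α) :
    ∑ w ∈ univ.filter (fun w => (rootedProd G (SimpleGraph.pathGraph t) v).Adj (x, v) w), f w
      = (prv (FF f x) v.1 + FF f x (v.1 + 1))
        + ∑ y ∈ univ.filter (fun y => G.Adj x y), f (y, v) := by
  rw [Finset.sum_filter, Fintype.sum_prod_type]
  have key : ∀ (y : α) (k : Fin t),
      (if (rootedProd G (SimpleGraph.pathGraph t) v).Adj (x, v) (y, k) then f (y, k) else 0)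
      = (if y = x ∧ (SimpleGraph.pathGraph t).Adj v k then f (y, k) else 0)
        + (if k = v ∧ G.Adj x y then f (y, k) else 0) := by
    intro y k
    by_cases h1 : y = x ∧ (SimpleGraph.pathGraph t).Adj v k
    · have hk : k ≠ v := h1.2.ne'
      rw [if_pos ((rootedProd_adj G (SimpleGraph.pathGraph t) v (x, v) (y, k)).2
          (Or.inl ⟨h1.1.symm, h1.2⟩)), if_pos h1,
        if_neg (fun h : k = v ∧ G.Adj x y => hk h.1)]
      exact (Nat.add_zero _).symm
    · by_cases h2 : k = v ∧ G.Adj x y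
      · rw [if_pos ((rootedProd_adj G (SimpleGraph.pathGraph t) v (x, v) (y, k)).2
          (Or.inr ⟨rfl, h2.1, h2.2⟩)), if_neg h1, if_pos h2]
        exact (Nat.zero_add _).symm
      · rw [if_neg h1, if_neg h2,
          if_neg (show ¬ (rootedProd G (SimpleGraph.pathGraph t) v).Adj (x, v) (y, k)
            from fun h => by
              rcases (rootedProd_adj G (SimpleGraph.pathGraph t) v (x, v) (y, k)).1 h with
                ⟨e, hh⟩ | ⟨_, e2, hh⟩
              · exact h1 ⟨e.symm, hh⟩
              · exact h2 ⟨e2, hh⟩)]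
  simp only [key]
  simp only [Finset.sum_add_distrib]
  congr 1
  · rw [Finset.sum_eq_single x (fun y _ hyx => Finset.sum_eq_zero (fun k _ =>
      if_neg (fun h => hyx h.1))) (fun h => absurd (mem_univ x) h)]
    simp only [eq_self_iff_true, true_and]
    rw [← Finset.sum_filter, pathSum]
  · rw [Finset.sum_filter]
    apply Finset.sum_congr rfl
    intro y _
    by_cases hadj : G.Adj x y
    · rw [if_pos hadj]
      have : ∀ k : Fin t, (k = v ∧ G.Adj x y) = (k = v) := by
        intro k; apply propext; exact ⟨fun h => h.1, fun h => ⟨h, hadj⟩⟩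
      simp only [this]
      rw [Finset.sum_ite_eq' univ v (fun k => f (y, k)), if_pos (mem_univ _)]
    · rw [if_neg hadj, Finset.sum_eq_zero (fun k _ => if_neg (fun h => hadj h.2))]

lemma totalS (f : α × Fin t → ℕ) : ∑ u, f u = ∑ x, S (FF f x) t := by
  rw [Fintype.sum_prod_type]
  apply Finset.sum_congr rfl
  intro x _
  rw [S, ← Fin.sum_univ_eq_sum_range (fun n => FF f x n) t]
  exact Finset.sum_congr rfl (fun j _ => (FF_app f x j).symm)

omit [Fintype α] in
lemma deg_end (ht : 2 ≤ t) (v : Fin t) (hv : v.1 = 0 ∨ v.1 = t - 1) :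
    deg (SimpleGraph.pathGraph t) v = 1 := by
  rcases hv with hv | hv
  · have h1 : (1 : ℕ) < t := by omega
    have : univ.filter (fun w => (SimpleGraph.pathGraph t).Adj v w) = {⟨1, h1⟩} := by
      ext k
      simp only [mem_filter, mem_univ, true_and, mem_singleton, SimpleGraph.pathGraph_adj,
        Fin.ext_iff]
      omega
    rw [deg, this, card_singleton]
  · have h1 : t - 2 < t := by omega
    have : univ.filter (fun w => (SimpleGraph.pathGraph t).Adj v w) = {⟨t - 2, h1⟩} := by
      ext k
      simp only [mem_filter, mem_univ, true_and, mem_singleton, SimpleGraph.pathGraph_adj,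
        Fin.ext_iff]
      have := k.isLt
      omega
    rw [deg, this, card_singleton]

omit [Fintype α] in
lemma deg_int (v : Fin t) (h0 : v.1 ≠ 0) (h1 : v.1 ≠ t - 1) :
    2 ≤ deg (SimpleGraph.pathGraph t) v := by
  have hvt := v.isLt
  have ha : (v.1 - 1) < t := by omega
  have hb : (v.1 + 1) < t := by omega
  have hsub : ({⟨v.1 - 1, ha⟩, ⟨v.1 + 1, hb⟩} : Finset (Fin t)) ⊆
      univ.filter (fun w => (SimpleGraph.pathGraph t).Adj v w) := by
    intro k hk
    simp only [mem_insert, mem_singleton] at hk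
    simp only [mem_filter, mem_univ, true_and, SimpleGraph.pathGraph_adj]
    rcases hk with rfl | rfl
    · right; show v.1 - 1 + 1 = v.1; omega
    · left; rfl
  have hcard : ({⟨v.1 - 1, ha⟩, ⟨v.1 + 1, hb⟩} : Finset (Fin t)).card = 2 := by
    rw [card_insert_of_notMem (by
      intro hmem; simp only [mem_singleton, Fin.mk.injEq] at hmem; omega), card_singleton]
  rw [← hcard]
  exact card_le_card hsub

end Graphs
end Stmt17Aux

section AuxTest
open Finset
open scoped Classical
namespace Stmt17Aux

-- counting lemmas
lemma cnt (r : ℕ) (hr : r < 2) (n : ℕ) :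
    (∑ j ∈ Finset.range n, if j % 2 = r then (1:ℕ) else 0) = (n + 1 - r) / 2 := by
  induction n with
  | zero => rw [Finset.sum_range_zero]; omega
  | succ n ih =>
    rw [Finset.sum_range_succ, ih]
    by_cases h : n % 2 = r
    · rw [if_pos h]; omega
    · rw [if_neg h]; omega

lemma sum_ite_or (s : Finset ℕ) (p q : ℕ → Prop) [DecidablePred p] [DecidablePred q]
    (hdisj : ∀ j ∈ s, ¬(p j ∧ q j)) :
    ∑ j ∈ s, (if p j ∨ q j then (1:ℕ) else 0)
      = (∑ j ∈ s, (if p j then (1:ℕ) else 0)) + ∑ j ∈ s, (if q j then (1:ℕ) else 0) := by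
  rw [← Finset.sum_add_distrib]
  apply Finset.sum_congr rfl
  intro j hj
  by_cases hp : p j
  · rw [if_pos hp, if_pos (Or.inl hp), if_neg (fun hq => hdisj j hj ⟨hp, hq⟩)]
  · by_cases hq : q j
    · rw [if_neg hp, if_pos hq, if_pos (Or.inr hq)]
    · rw [if_neg hp, if_neg hq, if_neg (by tauto)]

lemma cntFar (t j0 : ℕ) (h : j0 < t) :
    ∑ j ∈ Finset.range t, (if j = j0 then (1:ℕ) else 0) = 1 := by
  rw [Finset.sum_ite_eq' (Finset.range t) j0 (fun _ => (1:ℕ)), if_pos (Finset.mem_range.2 h)]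

lemma cntU (t : ℕ) (ht : 2 ≤ t) :
    (∑ j ∈ Finset.range t, if j % 2 = 0 ∨ j = t - 1 then (1:ℕ) else 0) = (t + 2) / 2 := by
  by_cases hpar : t % 2 = 1
  · have : ∀ j ∈ Finset.range t, (if j % 2 = 0 ∨ j = t - 1 then (1:ℕ) else 0)
        = (if j % 2 = 0 then (1:ℕ) else 0) := by
      intro j hj
      have := Finset.mem_range.1 hj
      by_cases h : j % 2 = 0
      · rw [if_pos (Or.inl h), if_pos h]
      · rw [if_neg h, if_neg (by intro hc; rcases hc with hc | hc <;> omega)]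
    rw [Finset.sum_congr rfl this, cnt 0 (by omega)]
    omega
  · rw [sum_ite_or (Finset.range t) (fun j => j % 2 = 0) (fun j => j = t - 1)
      (by intro j hj; omega), cnt 0 (by omega), cntFar t (t-1) (by omega)]
    omega

lemma cntD (t r : ℕ) (ht : 2 ≤ t) (hte : t % 2 = 0) (hr : r < 2) (j0 : ℕ) (hj0 : j0 < t)
    (hpar : j0 % 2 ≠ r) :
    (∑ j ∈ Finset.range t, if j % 2 = r ∨ j = j0 then (1:ℕ) else 0) = t / 2 + 1 := by
  rw [sum_ite_or (Finset.range t) (fun j => j % 2 = r) (fun j => j = j0)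
    (by intro j hj; rintro ⟨h1, rfl⟩; exact hpar h1), cnt r hr, cntFar t j0 hj0]
  omega

lemma cntN (t r : ℕ) (hte : t % 2 = 0) (hr : r < 2) :
    (∑ j ∈ Finset.range t, if ¬ (j % 2 = r) then (1:ℕ) else 0) = t / 2 := by
  have : ∀ j ∈ Finset.range t, (if ¬ (j % 2 = r) then (1:ℕ) else 0)
      = (if j % 2 = 1 - r then (1:ℕ) else 0) := by
    intro j _
    by_cases h : j % 2 = r
    · rw [if_neg (by omega), if_neg (by omega)]
    · rw [if_pos h, if_pos (by omega)]
  rw [Finset.sum_congr rfl this, cnt (1-r) (by omega)]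
  omega

end Stmt17Aux
end AuxTest

namespace Stmt17Aux
open Finset
section Main
variable {α : Type*} [Fintype α] (G : SimpleGraph α) {t : ℕ}

lemma condAt {v : Fin t} {f : α × Fin t → ℕ}
    (hf : IsIDF (rootedProd G (SimpleGraph.pathGraph t) v) f) (x : α) (j : Fin t)
    (hj : j ≠ v) (h0 : f (x, j) = 0) :
    2 ≤ prv (FF f x) j.1 + FF f x (j.1 + 1) := by
  have h := hf.2 (x, j) h0
  rwa [copySum G f v x j hj] at h

lemma condAt' {v : Fin t} {f : α × Fin t → ℕ}
    (hf : IsIDF (rootedProd G (SimpleGraph.pathGraph t) v) f) (x : α) (j : ℕ)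
    (hjt : j < t) (hj : j ≠ v.1) (h0 : FF f x j = 0) :
    2 ≤ prv (FF f x) j + FF f x (j + 1) := by
  have hne : (⟨j, hjt⟩ : Fin t) ≠ v := by
    intro e; apply hj; rw [← e]
  have h0' : f (x, ⟨j, hjt⟩) = 0 := by rw [← FF_app f x ⟨j, hjt⟩]; exact h0
  exact condAt G hf x ⟨j, hjt⟩ hne h0'

lemma rootCondE {v : Fin t} {f : α × Fin t → ℕ}
    (hf : IsIDF (rootedProd G (SimpleGraph.pathGraph t) v) f) (x : α) (h0 : f (x, v) = 0) :
    2 ≤ (prv (FF f x) v.1 + FF f x (v.1 + 1))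
        + ∑ y ∈ Finset.univ.filter (fun y => G.Adj x y), f (y, v) := by
  have h := hf.2 (x, v) h0
  rwa [rootSum G f v x] at h

lemma copyHR {v : Fin t} {f : α × Fin t → ℕ}
    (hf : IsIDF (rootedProd G (SimpleGraph.pathGraph t) v) f) (hv : v.1 = t - 1) (x : α) :
    HR (FF f x) t := by
  intro j hj h0
  exact condAt' G hf x j (by omega) (by omega) h0

lemma copyHL {v : Fin t} {f : α × Fin t → ℕ}
    (hf : IsIDF (rootedProd G (SimpleGraph.pathGraph t) v) f) (hv : v.1 = 0) (x : α) :
    HL (FF f x) t := by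
  intro j hj1 hjt h0
  have h := condAt' G hf x j hjt (by omega) h0
  rw [prv, if_neg (by omega)] at h
  by_cases hlt : j + 1 < t
  · rw [if_pos hlt]; exact h
  · rw [if_neg hlt]
    have hz : FF f x (j + 1) = 0 := dif_neg (by omega)
    omega

lemma lb_leaf_copy (ht : 2 ≤ t) {v : Fin t} (hv : v.1 = 0 ∨ v.1 = t - 1)
    {f : α × Fin t → ℕ} (hf : IsIDF (rootedProd G (SimpleGraph.pathGraph t) v) f) (x : α) :
    t + f (x, v) ≤ 2 * S (FF f x) t := by
  have happ := FF_app f x v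
  rcases hv with hv | hv
  · have h := core1L (m := t) (f := FF f x) ht (copyHL G hf hv x)
    rw [hv] at happ
    omega
  · have h := core1 t (FF f x) ht (copyHR G hf hv x)
    rw [hv] at happ
    omega

lemma lb_evenleaf_copy2 (ht : 2 ≤ t) (hte : t % 2 = 0) {v : Fin t}
    (hv : v.1 = 0 ∨ v.1 = t - 1)
    {f : α × Fin t → ℕ} (hf : IsIDF (rootedProd G (SimpleGraph.pathGraph t) v) f) (x : α)
    (h2 : 2 ≤ prv (FF f x) v.1 + FF f x (v.1 + 1) ∨ 1 ≤ f (x, v)) :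
    t + 2 ≤ 2 * S (FF f x) t := by
  rcases h2 with h2 | h1
  · rcases hv with hv | hv
    · rw [hv] at h2
      rw [prv, if_pos rfl] at h2
      apply fullEvenL ht hte (copyHL G hf hv x)
      intro _
      have e : (0:ℕ) + 1 = 1 := rfl
      rw [e] at h2
      omega
    · rw [hv] at h2
      have hz : FF f x (t - 1 + 1) = 0 := dif_neg (by omega)
      apply fullEven ht hte (copyHR G hf hv x)
      intro _
      omega
  · have h := lb_leaf_copy G ht hv hf x
    omega

lemma lb_nonleaf_copy (ht : 2 ≤ t) {v : Fin t} (hv0 : v.1 ≠ 0) (hv1 : v.1 ≠ t - 1)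
    {f : α × Fin t → ℕ} (hf : IsIDF (rootedProd G (SimpleGraph.pathGraph t) v) f) (x : α) :
    t + 2 - t % 2 ≤ 2 * S (FF f x) t := by
  have hvt := v.isLt
  have hm1 : 2 ≤ v.1 + 1 := by omega
  have hm2 : 2 ≤ t - v.1 := by omega
  have HRleft : HR (FF f x) (v.1 + 1) := fun j hj h0 =>
    condAt' G hf x j (by omega) (by omega) h0
  set Fr : ℕ → ℕ := fun j => (FF f x) (v.1 + j) with hFr
  have HLright : HL Fr (t - v.1) := by
    intro j hj1 hjt h0
    have h := condAt' G hf x (v.1 + j) (by omega) (by omega) h0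
    rw [prv, if_neg (by omega)] at h
    have e1 : Fr (j - 1) = (FF f x) (v.1 + j - 1) := by show (FF f x) _ = (FF f x) _; exact congrArg _ (by omega)
    by_cases hlt : j + 1 < t - v.1
    · rw [if_pos hlt, e1]
      have e2 : Fr (j + 1) = (FF f x) (v.1 + j + 1) := by show (FF f x) _ = (FF f x) _; exact congrArg _ (by omega)
      rw [e2]; exact h
    · rw [if_neg hlt, e1]
      have hz : (FF f x) (v.1 + j + 1) = 0 := dif_neg (by omega)
      omega
  have hsplit : S (FF f x) (v.1 + 1) + S Fr (t - v.1) = S (FF f x) t + (FF f x) v.1 := by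
    have h1 : S (FF f x) t = S (FF f x) (v.1 + 1) + ∑ j ∈ Finset.range (t - v.1 - 1), (FF f x) (v.1 + 1 + j) := by
      have h := Finset.sum_range_add (FF f x) (v.1 + 1) (t - v.1 - 1)
      rw [show v.1 + 1 + (t - v.1 - 1) = t by omega] at h
      exact h
    have h2 : S Fr (t - v.1) = (FF f x) v.1 + ∑ j ∈ Finset.range (t - v.1 - 1), (FF f x) (v.1 + 1 + j) := by
      have h := Finset.sum_range_succ' Fr (t - v.1 - 1)
      rw [show t - v.1 - 1 + 1 = t - v.1 by omega] at h
      rw [S, h]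
      have e0 : Fr 0 = (FF f x) v.1 := by show (FF f x) _ = (FF f x) _; congr 1
      have ej : ∀ j ∈ Finset.range (t - v.1 - 1), Fr (j + 1) = (FF f x) (v.1 + 1 + j) := by
        intro j _; show (FF f x) _ = (FF f x) _; exact congrArg _ (by omega)
      rw [Finset.sum_congr rfl ej, e0]
      exact Nat.add_comm _ _
    omega
  have hcF : (FF f x) v.1 = f (x, v) := FF_app f x v
  have hc2 : f (x, v) ≤ 2 := hf.1 (x, v)
  have hL1 : (v.1 + 1) + (FF f x) v.1 ≤ 2 * S (FF f x) (v.1 + 1) := by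
    have h := core1 (v.1 + 1) (FF f x) (by omega) HRleft
    rwa [show v.1 + 1 - 1 = v.1 by omega] at h
  have e0 : Fr 0 = (FF f x) v.1 := by show (FF f x) _ = (FF f x) _; congr 1
  have hR1 : (t - v.1) + (FF f x) v.1 ≤ 2 * S Fr (t - v.1) := by
    have h := core1L hm2 HLright
    rwa [e0] at h
  by_cases hc0 : (FF f x) v.1 = 0
  · by_cases hpar : t % 2 = 1
    · omega
    · -- t even, one of the two segments has odd length
      by_cases hm1odd : (v.1 + 1) % 2 = 1
      · -- left segment odd: v.1 even ≥ 2
        have hfull : v.1 + 2 ≤ 2 * S (FF f x) v.1 := by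
          apply fullEven (by omega) (by omega) (HR_mono HRleft (by omega))
          intro h0
          have h := condAt' G hf x (v.1 - 1) (by omega) (by omega) h0
          rw [show v.1 - 1 + 1 = v.1 by omega, hc0] at h
          omega
        have hSL : S (FF f x) (v.1 + 1) = S (FF f x) v.1 + (FF f x) v.1 := S_succ (FF f x) v.1
        omega
      · -- right segment odd
        set k := t - v.1 - 1 with hkdef
        set g : ℕ → ℕ := fun n => (FF f x) (v.1 + n + 1) with hg
        have hgfull : k + 2 ≤ 2 * S g k := by
          apply fullEven (k := k) (by omega) (by omega)
          · intro j hj h0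
            have h := condAt' G hf x (v.1 + j + 1) (by omega) (by omega) h0
            rw [prv, if_neg (by omega)] at h
            have e1 : (FF f x) (v.1 + j + 1 - 1) = (FF f x) (v.1 + j) := by exact congrArg _ (by omega)
            have e2 : (FF f x) (v.1 + j + 1 + 1) = g (j + 1) := by show _ = (FF f x) _; exact congrArg _ (by omega)
            rw [e1, e2] at h
            by_cases hj0 : j = 0
            · subst hj0
              rw [prv, if_pos rfl]
              rw [show v.1 + 0 = v.1 by omega, hc0] at h
              omega
            · rw [prv, if_neg hj0]
              have e3 : g (j - 1) = (FF f x) (v.1 + j) := by show (FF f x) _ = (FF f x) _; exact congrArg _ (by omega)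
              rw [e3]
              exact h
          · intro h0
            have e4 : g (k - 1) = (FF f x) (t - 1) := by show (FF f x) _ = (FF f x) _; exact congrArg _ (by omega)
            rw [e4] at h0
            have h := condAt' G hf x (t - 1) (by omega) (by omega) h0
            have hz : (FF f x) (t - 1 + 1) = 0 := dif_neg (by omega)
            rw [prv, if_neg (by omega), hz] at h
            rw [prv, if_neg (by omega)]
            have e5 : g (k - 1 - 1) = (FF f x) (t - 1 - 1) := by show (FF f x) _ = (FF f x) _; exact congrArg _ (by omega)
            rw [e5]
            omega
        have hSR : S Fr (t - v.1) = (FF f x) v.1 + S g k := by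
          have h := Finset.sum_range_succ' Fr k
          rw [show k + 1 = t - v.1 by omega] at h
          rw [S, h]
          have ej : ∀ j ∈ Finset.range k, Fr (j + 1) = g j := by
            intro j _; show (FF f x) _ = (FF f x) _; exact congrArg _ (by omega)
          rw [Finset.sum_congr rfl ej, e0, S]
          exact Nat.add_comm _ _
        omega
  · by_cases hc1 : (FF f x) v.1 = 1
    · omega
    · -- (FF f x) v.1 = 2
      have hcc : (FF f x) v.1 = 2 := by omega
      by_cases hm13 : 3 ≤ v.1 + 1
      · have hL2 : (v.1 + 1) + 3 ≤ 2 * S (FF f x) (v.1 + 1) :=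
          core2 hm13 HRleft (by rw [show v.1 + 1 - 1 = v.1 by omega]; omega)
        by_cases hm23 : 3 ≤ t - v.1
        · have hR2 : (t - v.1) + 3 ≤ 2 * S Fr (t - v.1) :=
            core2L hm23 HLright (by rw [e0]; omega)
          omega
        · omega
      · by_cases hm23 : 3 ≤ t - v.1
        · have hR2 : (t - v.1) + 3 ≤ 2 * S Fr (t - v.1) :=
            core2L hm23 HLright (by rw [e0]; omega)
          omega
        · omega

end Main
end Stmt17Aux

namespace Stmt17Aux
open Finset

lemma le_italian {β : Type*} [Fintype β] (R : SimpleGraph β) (N : ℕ)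
    (h : ∀ f : β → ℕ, IsIDF R f → N ≤ ∑ u, f u) : N ≤ italianNumber R := by
  apply le_csInf
  · exact ⟨∑ u : β, 2, fun _ => 2, ⟨fun u => le_rfl, fun u h2 => absurd h2 (by norm_num)⟩, rfl⟩
  · rintro b ⟨f, hf, rfl⟩
    exact h f hf

lemma italian_le {β : Type*} [Fintype β] (R : SimpleGraph β) {N : ℕ} (f : β → ℕ)
    (hf : IsIDF R f) (hw : ∑ u, f u = N) : italianNumber R ≤ N :=
  Nat.sInf_le ⟨f, hf, hw⟩

section Main2
variable {α : Type*} [Fintype α] (G : SimpleGraph α) {t : ℕ}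

lemma internal_le (f : α × Fin t → ℕ) (v : Fin t) (x : α) (j : Fin t) :
    prv (FF f x) j.1 + FF f x (j.1 + 1)
      ≤ ∑ w ∈ univ.filter (fun w =>
          (rootedProd G (SimpleGraph.pathGraph t) v).Adj (x, j) w), f w := by
  by_cases hj : j = v
  · subst hj; rw [rootSum G f j x]; exact Nat.le_add_right _ _
  · rw [copySum G f v x j hj]

lemma ub1 (ht : 2 ≤ t) (v : Fin t) :
    italianNumber (rootedProd G (SimpleGraph.pathGraph t) v)
      ≤ Fintype.card α * ((t + 2) / 2) := by
  classical
  set g : α × Fin t → ℕ := fun p => if p.2.1 % 2 = 0 ∨ p.2.1 = t - 1 then 1 else 0 with hg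
  have hval : ∀ (x : α) (n : ℕ), n < t →
      FF g x n = if n % 2 = 0 ∨ n = t - 1 then 1 else 0 := by
    intro x n hn; rw [FF, dif_pos hn]
  have hIDF : IsIDF (rootedProd G (SimpleGraph.pathGraph t) v) g := by
    constructor
    · intro u; simp only [hg]; split_ifs <;> omega
    · rintro ⟨x, j⟩ h0
      have hjt := j.isLt
      have hA : ¬ (j.1 % 2 = 0 ∨ j.1 = t - 1) := by
        intro hc
        simp only [hg] at h0; rw [if_pos hc] at h0; exact one_ne_zero h0
      refine le_trans ?_ (internal_le G g v x j)
      have e1 : prv (FF g x) j.1 = 1 := by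
        rw [prv, if_neg (by omega), hval x (j.1 - 1) (by omega), if_pos (by omega)]
      have e2 : FF g x (j.1 + 1) = 1 := by
        rw [hval x (j.1 + 1) (by omega), if_pos (by omega)]
      omega
  have hw : ∑ u, g u = Fintype.card α * ((t + 2) / 2) := by
    rw [totalS g]
    have hx : ∀ x : α, S (FF g x) t = (t + 2) / 2 := by
      intro x
      rw [S, Finset.sum_congr rfl (fun j hj => hval x j (Finset.mem_range.1 hj))]
      exact cntU t ht
    rw [Finset.sum_congr rfl (fun x _ => hx x), Finset.sum_const, card_univ, smul_eq_mul]
  exact italian_le _ g hIDF hw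

lemma dom_nonempty : {n | ∃ D : Finset α, IsDomSet G ↑D ∧ D.card = n}.Nonempty :=
  ⟨(Finset.univ : Finset α).card, Finset.univ, fun u hu =>
    absurd (Finset.mem_coe.2 (Finset.mem_univ u)) hu, rfl⟩

lemma lb_even_total (ht : 2 ≤ t) (hte : t % 2 = 0) {v : Fin t}
    (hv : v.1 = 0 ∨ v.1 = t - 1) :
    Fintype.card α * (t / 2) + dominationNumber G
      ≤ italianNumber (rootedProd G (SimpleGraph.pathGraph t) v) := by
  classical
  apply le_italian
  intro f hf
  have hdom : IsDomSet G ↑(univ.filter (fun x : α => t / 2 + 1 ≤ S (FF f x) t)) := by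
    intro u hu
    have hu' : ¬ (t / 2 + 1 ≤ S (FF f u) t) := by
      intro hc
      exact hu (Finset.mem_coe.2 (Finset.mem_filter.2 ⟨Finset.mem_univ u, hc⟩))
    have hbase := lb_leaf_copy G ht hv hf u
    have hfu0 : f (u, v) = 0 := by
      by_contra hc
      have := lb_evenleaf_copy2 G ht hte hv hf u (Or.inr (by omega))
      omega
    have hint : prv (FF f u) v.1 + FF f u (v.1 + 1) ≤ 1 := by
      by_contra hcon
      have := lb_evenleaf_copy2 G ht hte hv hf u (Or.inl (by omega))
      omega
    have hroot := rootCondE G hf u hfu0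
    have hcross : 1 ≤ ∑ y ∈ univ.filter (fun y => G.Adj u y), f (y, v) := by omega
    have hex : ∃ y ∈ univ.filter (fun y => G.Adj u y), 1 ≤ f (y, v) := by
      by_contra hno
      push_neg at hno
      have : ∑ y ∈ univ.filter (fun y => G.Adj u y), f (y, v) = 0 :=
        Finset.sum_eq_zero (fun y hy => by have := hno y hy; omega)
      omega
    obtain ⟨y, hy, hfy⟩ := hex
    refine ⟨y, ?_, (Finset.mem_filter.1 hy).2⟩
    have hSy := lb_evenleaf_copy2 G ht hte hv hf y (Or.inr hfy)
    exact Finset.mem_coe.2 (Finset.mem_filter.2 ⟨Finset.mem_univ y, by omega⟩)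
  have hγ : dominationNumber G ≤ (univ.filter (fun x : α => t / 2 + 1 ≤ S (FF f x) t)).card :=
    Nat.sInf_le ⟨_, hdom, rfl⟩
  have hcnt : ∑ x : α, (t / 2 + if x ∈ univ.filter (fun x : α => t / 2 + 1 ≤ S (FF f x) t)
      then 1 else 0) ≤ ∑ x : α, S (FF f x) t := by
    apply Finset.sum_le_sum
    intro x _
    by_cases hx : x ∈ univ.filter (fun x : α => t / 2 + 1 ≤ S (FF f x) t)
    · rw [if_pos hx]
      have := (Finset.mem_filter.1 hx).2
      omega
    · rw [if_neg hx]
      have := lb_leaf_copy G ht hv hf x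
      omega
  have hsum : ∑ x : α, (t / 2 + if x ∈ univ.filter (fun x : α => t / 2 + 1 ≤ S (FF f x) t)
      then 1 else 0)
      = Fintype.card α * (t / 2)
        + (univ.filter (fun x : α => t / 2 + 1 ≤ S (FF f x) t)).card := by
    rw [Finset.sum_add_distrib, Finset.sum_const, card_univ, smul_eq_mul]
    congr 1
    rw [Finset.sum_ite_mem, Finset.univ_inter, Finset.sum_const, smul_eq_mul, mul_one]
  rw [totalS f]
  omega

lemma ub_even (ht : 2 ≤ t) (hte : t % 2 = 0) {v : Fin t} (hv : v.1 = 0 ∨ v.1 = t - 1) :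
    italianNumber (rootedProd G (SimpleGraph.pathGraph t) v)
      ≤ Fintype.card α * (t / 2) + dominationNumber G := by
  classical
  obtain ⟨D, hD, hDcard⟩ := Nat.sInf_mem (dom_nonempty G)
  have hvt := v.isLt
  set g : α × Fin t → ℕ := fun p => if p.1 ∈ D then
      (if p.2.1 % 2 = v.1 % 2 ∨ p.2.1 + v.1 = t - 1 then 1 else 0)
      else (if ¬ (p.2.1 % 2 = v.1 % 2) then 1 else 0) with hg
  have hval : ∀ (x : α) (n : ℕ), n < t →
      FF g x n = if x ∈ D then (if n % 2 = v.1 % 2 ∨ n + v.1 = t - 1 then 1 else 0)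
        else (if ¬ (n % 2 = v.1 % 2) then 1 else 0) := by
    intro x n hn; rw [FF, dif_pos hn]
  have hIDF : IsIDF (rootedProd G (SimpleGraph.pathGraph t) v) g := by
    constructor
    · intro u; simp only [hg]; split_ifs <;> omega
    · rintro ⟨x, j⟩ h0
      have hjt := j.isLt
      by_cases hx : x ∈ D
      · have hA : ¬ (j.1 % 2 = v.1 % 2 ∨ j.1 + v.1 = t - 1) := by
          intro hc
          simp only [hg] at h0
          rw [if_pos hx, if_pos hc] at h0
          exact one_ne_zero h0
        refine le_trans ?_ (internal_le G g v x j)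
        have e1 : prv (FF g x) j.1 = 1 := by
          rw [prv, if_neg (by omega), hval x (j.1 - 1) (by omega), if_pos hx, if_pos (by omega)]
        have e2 : FF g x (j.1 + 1) = 1 := by
          rw [hval x (j.1 + 1) (by omega), if_pos hx, if_pos (by omega)]
        omega
      · have hB : j.1 % 2 = v.1 % 2 := by
          by_contra hc
          simp only [hg] at h0
          rw [if_neg hx, if_pos hc] at h0
          exact one_ne_zero h0
        by_cases hroot : j = v
        · subst hroot
          rw [rootSum G g j x]
          have hin : 1 ≤ prv (FF g x) j.1 + FF g x (j.1 + 1) := by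
            rcases hv with hv | hv
            · have e : FF g x (j.1 + 1) = 1 := by
                rw [hval x (j.1 + 1) (by omega), if_neg hx, if_pos (by omega)]
              omega
            · have e : prv (FF g x) j.1 = 1 := by
                rw [prv, if_neg (by omega), hval x (j.1 - 1) (by omega), if_neg hx,
                  if_pos (by omega)]
              omega
          obtain ⟨y, hyD, hadj⟩ := hD x (fun hc => hx (Finset.mem_coe.1 hc))
          have hyval : g (y, j) = 1 := by
            simp [hg, Finset.mem_coe.1 hyD]
          have hy' : y ∈ univ.filter (fun y' => G.Adj x y') :=
            Finset.mem_filter.2 ⟨Finset.mem_univ y, hadj⟩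
          have hcross : 1 ≤ ∑ y' ∈ univ.filter (fun y' => G.Adj x y'), g (y', j) := by
            calc 1 = g (y, j) := hyval.symm
            _ ≤ _ := Finset.single_le_sum (f := fun y' => g (y', j))
                (fun i _ => Nat.zero_le _) hy'
          omega
        · have hjv : j.1 ≠ v.1 := fun e => hroot (Fin.ext e)
          refine le_trans ?_ (internal_le G g v x j)
          have e1 : prv (FF g x) j.1 = 1 := by
            rw [prv, if_neg (by omega), hval x (j.1 - 1) (by omega), if_neg hx,
              if_pos (by omega)]
          have e2 : FF g x (j.1 + 1) = 1 := by
            rw [hval x (j.1 + 1) (by omega), if_neg hx, if_pos (by omega)]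
          omega
  have hwx : ∀ x : α, S (FF g x) t = if x ∈ D then t / 2 + 1 else t / 2 := by
    intro x
    rw [S, Finset.sum_congr rfl (fun j hj => hval x j (Finset.mem_range.1 hj))]
    by_cases hx : x ∈ D
    · rw [Finset.sum_congr rfl (fun j _ => if_pos hx), if_pos hx]
      have hrw : ∀ j ∈ Finset.range t, (if j % 2 = v.1 % 2 ∨ j + v.1 = t - 1 then (1:ℕ) else 0)
          = (if j % 2 = v.1 % 2 ∨ j = t - 1 - v.1 then (1:ℕ) else 0) := by
        intro j hj
        exact if_congr (by omega) rfl rfl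
      rw [Finset.sum_congr rfl hrw]
      exact cntD t (v.1 % 2) ht hte (by omega) (t - 1 - v.1) (by omega) (by omega)
    · rw [Finset.sum_congr rfl (fun j _ => if_neg hx), if_neg hx]
      exact cntN t (v.1 % 2) hte (by omega)
  have hw : ∑ u, g u = Fintype.card α * (t / 2) + dominationNumber G := by
    rw [totalS g, Finset.sum_congr rfl (fun x _ => hwx x)]
    have hp : ∀ x : α, (if x ∈ D then t / 2 + 1 else t / 2)
        = t / 2 + (if x ∈ D then 1 else 0) := by
      intro x; by_cases hx : x ∈ D
      · rw [if_pos hx, if_pos hx]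
      · rw [if_neg hx, if_neg hx]; omega
    rw [Finset.sum_congr rfl (fun x _ => hp x), Finset.sum_add_distrib, Finset.sum_const,
      card_univ, smul_eq_mul, Finset.sum_ite_mem, Finset.univ_inter, Finset.sum_const,
      smul_eq_mul, mul_one, hDcard]
    rfl
  exact italian_le _ g hIDF hw

end Main2
end Stmt17Aux

/-- Theorem: for t ≥ 2, if v is a leaf of the path P_t then
γ_I(G∘_v P_t) = n(G)⌈(t+1)/2⌉ for odd t and γ_I(G∘_v P_t) = n(G)⌈t/2⌉ + γ(G) for
even t; if v is a non-leaf vertex of P_t then γ_I(G∘_v P_t) = n(G)⌈(t+1)/2⌉. -/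
theorem stmt17 {α : Type*} [Fintype α] [Nonempty α] (G : SimpleGraph α)
    (t : ℕ) (ht : 2 ≤ t) :
    (∀ v : Fin t, deg (SimpleGraph.pathGraph t) v = 1 →
      (Odd t → italianNumber (rootedProd G (SimpleGraph.pathGraph t) v) =
          Fintype.card α * ((t + 2) / 2)) ∧
      (Even t → italianNumber (rootedProd G (SimpleGraph.pathGraph t) v) =
          Fintype.card α * ((t + 1) / 2) + dominationNumber G)) ∧
    (∀ v : Fin t, deg (SimpleGraph.pathGraph t) v ≠ 1 →
      italianNumber (rootedProd G (SimpleGraph.pathGraph t) v) =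
        Fintype.card α * ((t + 2) / 2)) := by
  open Stmt17Aux in
  refine ⟨fun v hdeg => ?_, fun v hdeg => ?_⟩
  · have hv : v.1 = 0 ∨ v.1 = t - 1 := by
      by_contra hc
      push_neg at hc
      have := Stmt17Aux.deg_int v hc.1 hc.2
      omega
    constructor
    · intro hodd
      have hodd' : t % 2 = 1 := Nat.odd_iff.1 hodd
      apply le_antisymm (Stmt17Aux.ub1 G ht v)
      apply Stmt17Aux.le_italian
      intro f hf
      rw [Stmt17Aux.totalS f]
      calc Fintype.card α * ((t + 2) / 2) = ∑ _x : α, ((t + 2) / 2) := by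
            rw [Finset.sum_const, card_univ, smul_eq_mul]
        _ ≤ _ := Finset.sum_le_sum (fun x _ => by
            have := Stmt17Aux.lb_leaf_copy G ht hv hf x
            omega)
    · intro heven
      have he : t % 2 = 0 := Nat.even_iff.1 heven
      rw [show (t + 1) / 2 = t / 2 by omega]
      exact le_antisymm (Stmt17Aux.ub_even G ht he hv) (Stmt17Aux.lb_even_total G ht he hv)
  · have hv : v.1 ≠ 0 ∧ v.1 ≠ t - 1 := by
      by_contra hc
      have hor : v.1 = 0 ∨ v.1 = t - 1 := by tauto
      exact hdeg (Stmt17Aux.deg_end ht v hor)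
    apply le_antisymm (Stmt17Aux.ub1 G ht v)
    apply Stmt17Aux.le_italian
    intro f hf
    rw [Stmt17Aux.totalS f]
    calc Fintype.card α * ((t + 2) / 2) = ∑ _x : α, ((t + 2) / 2) := by
          rw [Finset.sum_const, card_univ, smul_eq_mul]
      _ ≤ _ := Finset.sum_le_sum (fun x _ => by
          have := Stmt17Aux.lb_nonleaf_copy G ht hv.1 hv.2 hf x
          omega)
end

section
/- Let G be a graph of maximum degree at least 2 with γ(G) < γ_I(G), let H be a graph and v ∈ V(H). Then γ_I(G∘_v H) = n(G)·(γ_I(H) − 1) + γ_I(G) if and only if γ_I(H − {v}) = γ_I(H) − 1 and both of the following hold: (i) every γ_I(H − {v})-function g satisfies g(y) = 0 for every neighbour y of v in H; (ii) every γ_I(H)-function h satisfies h(v) ≠ 2. -/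
open Finset

open scoped Classical

section Basic
variable {α : Type*} [Fintype α] (G : SimpleGraph α)

lemma isIDF_one : IsIDF G (fun _ => 1) :=
  ⟨fun _ => one_le_two, fun _ h => absurd h one_ne_zero⟩

lemma italian_set_nonempty : {n | ∃ f : α → ℕ, IsIDF G f ∧ ∑ u, f u = n}.Nonempty :=
  ⟨∑ u : α, (1:ℕ), fun _ => 1, isIDF_one G, rfl⟩

lemma exists_minIDF : ∃ f : α → ℕ, IsMinIDF G f := by
  have h := Nat.sInf_mem (italian_set_nonempty G)
  obtain ⟨f, hf, hw⟩ := h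
  exact ⟨f, hf, hw⟩

lemma italianNumber_le {f : α → ℕ} (hf : IsIDF G f) : italianNumber G ≤ ∑ u, f u :=
  Nat.sInf_le ⟨f, hf, rfl⟩

lemma le_italianNumber {k : ℕ} (h : ∀ f : α → ℕ, IsIDF G f → k ≤ ∑ u, f u) :
    k ≤ italianNumber G := by
  obtain ⟨f, hf, hw⟩ := exists_minIDF G
  exact hw ▸ h f hf

lemma one_le_italianNumber [Nonempty α] : 1 ≤ italianNumber G := by
  refine le_italianNumber G fun f hf => ?_
  by_contra hlt
  push_neg at hlt
  have hz : ∀ u, f u = 0 := by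
    intro u
    have := Finset.sum_eq_zero_iff.mp (Nat.lt_one_iff.mp hlt) u (mem_univ u)
    exact this
  obtain ⟨u⟩ := ‹Nonempty α›
  have h2 := hf.2 u (hz u)
  have : (∑ w ∈ Finset.univ.filter (fun w => G.Adj u w), f w) = 0 :=
    Finset.sum_eq_zero fun w _ => hz w
  omega

lemma exists_minDom : ∃ D : Finset α, IsDomSet G ↑D ∧ D.card = dominationNumber G := by
  have hne : {n | ∃ D : Finset α, IsDomSet G ↑D ∧ D.card = n}.Nonempty :=
    ⟨(univ : Finset α).card, univ, fun u hu => absurd (by simp) hu, rfl⟩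
  obtain ⟨D, hD, hc⟩ := Nat.sInf_mem hne
  exact ⟨D, hD, hc⟩

end Basic

section Del
variable {β : Type*} [Fintype β] (H : SimpleGraph β) (v : β)

lemma delAdj (a b : {w : β // w ≠ v}) : (deleteVertex H v).Adj a b ↔ H.Adj a.1 b.1 := by
  simp [deleteVertex]

lemma del_weight (F : β → ℕ) :
    ∑ b : {w : β // w ≠ v}, F b.1 = ∑ y ∈ univ.erase v, F y := by
  rw [← Finset.sum_subtype (p := fun w => w ≠ v) (univ.erase v) (by simp) F]

lemma del_weight' (F : β → ℕ) (h : F v = 0) :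
    ∑ b : {w : β // w ≠ v}, F b.1 = ∑ y, F y := by
  rw [del_weight, ← Finset.add_sum_erase univ F (mem_univ v), h, zero_add]

lemma del_nbrSum (F : β → ℕ) (a : {w : β // w ≠ v}) :
    ∑ y' ∈ univ.filter (fun y' => H.Adj a.1 y'), F y'
      = (∑ b ∈ univ.filter (fun b => (deleteVertex H v).Adj a b), F b.1)
        + (if H.Adj a.1 v then F v else 0) := by
  have h1 : ∑ b ∈ univ.filter (fun b => (deleteVertex H v).Adj a b), F b.1
      = ∑ b : {w : β // w ≠ v}, if H.Adj a.1 b.1 then F b.1 else 0 := by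
    rw [Finset.sum_filter]
    apply Finset.sum_congr rfl
    intro b _
    rw [delAdj]
  rw [h1, ← Finset.sum_subtype (p := fun w => w ≠ v) (univ.erase v) (by simp)
      (fun y => if H.Adj a.1 y then F y else 0),
    Finset.sum_filter, ← Finset.add_sum_erase univ _ (mem_univ v)]
  omega
end Del

section Prod
variable {α β : Type*} [Fintype α] [Fintype β] (G : SimpleGraph α) (H : SimpleGraph β) (v : β)

lemma total_weight (f : α × β → ℕ) : ∑ p, f p = ∑ x, copyWeight f x := by
  rw [Fintype.sum_prod_type]; rfl

lemma nbrSum_nonroot (f : α × β → ℕ) (x : α) (y : β) (hy : y ≠ v) :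
    ∑ w ∈ univ.filter (fun w => (rootedProd G H v).Adj (x, y) w), f w
      = ∑ y' ∈ univ.filter (fun y' => H.Adj y y'), f (x, y') := by
  rw [Finset.sum_filter, Finset.sum_filter, Fintype.sum_prod_type]
  rw [Finset.sum_eq_single x]
  · apply Finset.sum_congr rfl
    intro y' _
    have : (rootedProd G H v).Adj (x, y) (x, y') ↔ H.Adj y y' := by
      simp only [rootedProd, hy]
      tauto
    simp only [this]
  · intro x' _ hx'
    apply Finset.sum_eq_zero
    intro y' _
    rw [if_neg]
    simp only [rootedProd]
    push_neg
    exact ⟨fun h1 => (hx' h1.symm).elim, fun h1 => (hy h1).elim⟩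
  · intro h; exact absurd (mem_univ x) h

lemma nbrSum_root (f : α × β → ℕ) (x : α) :
    ∑ w ∈ univ.filter (fun w => (rootedProd G H v).Adj (x, v) w), f w
      = (∑ y' ∈ univ.filter (fun y' => H.Adj v y'), f (x, y'))
        + ∑ x' ∈ univ.filter (fun x' => G.Adj x x'), f (x', v) := by
  rw [Finset.sum_filter, Fintype.sum_prod_type]
  have key : ∀ x' y', (if (rootedProd G H v).Adj (x, v) (x', y') then f (x', y') else 0)
      = (if x = x' ∧ H.Adj v y' then f (x', y') else 0)
        + (if y' = v ∧ G.Adj x x' then f (x', y') else 0) := by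
    intro x' y'
    have hadj : (rootedProd G H v).Adj (x, v) (x', y') ↔
        (x = x' ∧ H.Adj v y') ∨ (y' = v ∧ G.Adj x x') := by
      simp only [rootedProd]
      tauto
    by_cases h1 : x = x' ∧ H.Adj v y' <;> by_cases h2 : y' = v ∧ G.Adj x x'
    · exact absurd (h2.1 ▸ h1.2) (H.loopless.irrefl v)
    · rw [if_pos (hadj.mpr (Or.inl h1)), if_pos h1, if_neg h2]; omega
    · rw [if_pos (hadj.mpr (Or.inr h2)), if_neg h1, if_pos h2]; omega
    · rw [if_neg, if_neg h1, if_neg h2]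
      rw [hadj]; tauto
  simp_rw [key, Finset.sum_add_distrib]
  congr 1
  · rw [Finset.sum_comm]
    rw [Finset.sum_filter]
    apply Finset.sum_congr rfl
    intro y' _
    rw [Finset.sum_eq_single x]
    · simp
    · intro x' _ hx'; rw [if_neg]; rintro ⟨h, -⟩; exact hx' h.symm
    · intro h; exact absurd (mem_univ x) h
  · rw [Finset.sum_filter]
    apply Finset.sum_congr rfl
    intro x' _
    rw [Finset.sum_eq_single v]
    · simp
    · intro y' _ hy'; rw [if_neg]; rintro ⟨h, -⟩; exact hy' h
    · intro h; exact absurd (mem_univ v) h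
end Prod

section Constr
variable {α β : Type*} [Fintype α] [Fintype β] (G : SimpleGraph α) (H : SimpleGraph β) (v : β)

lemma sum_dite_v (c : ℕ) (g : {w : β // w ≠ v} → ℕ) :
    ∑ y : β, (if h : y = v then c else g ⟨y, h⟩) = c + ∑ b, g b := by
  rw [← Finset.add_sum_erase univ _ (mem_univ v), dif_pos rfl]
  congr 1
  rw [Finset.sum_subtype (p := fun w => w ≠ v) (univ.erase v) (by simp)
      (fun y => if h : y = v then c else g ⟨y, h⟩)]
  apply Finset.sum_congr rfl
  intro b _
  rw [dif_neg b.2]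

/-- Generic construction: copies of an IDF on H−v, arbitrary root values. -/
lemma genUB (g : {w : β // w ≠ v} → ℕ) (hg : IsIDF (deleteVertex H v) g)
    (r : α → ℕ) (hr2 : ∀ x, r x ≤ 2)
    (hroot : ∀ x, r x = 0 →
      2 ≤ (∑ y' ∈ univ.filter (fun y' => H.Adj v y'),
            (if h : y' = v then 0 else g ⟨y', h⟩))
          + ∑ x' ∈ univ.filter (fun x' => G.Adj x x'), r x') :
    italianNumber (rootedProd G H v) ≤
      Fintype.card α * (∑ b, g b) + ∑ x, r x := by
  classical
  set F : α × β → ℕ := fun p => if h : p.2 = v then r p.1 else g ⟨p.2, h⟩ with hF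
  have hFroot : ∀ x, F (x, v) = r x := fun x => dif_pos rfl
  have hFnon : ∀ (x : α) (y : β) (h : y ≠ v), F (x, y) = g ⟨y, h⟩ := fun x y h => dif_neg h
  have hIDF : IsIDF (rootedProd G H v) F := by
    constructor
    · rintro ⟨x, y⟩
      by_cases h : y = v
      · subst h; rw [hFroot]; exact hr2 x
      · rw [hFnon x y h]; exact hg.1 _
    · rintro ⟨x, y⟩ h0
      by_cases hyv : y = v
      · rw [hyv] at h0 ⊢
        rw [hFroot] at h0
        rw [nbrSum_root]
        have e1 : ∑ y' ∈ univ.filter (fun y' => H.Adj v y'), F (x, y')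
            = ∑ y' ∈ univ.filter (fun y' => H.Adj v y'),
                (if h : y' = v then 0 else g ⟨y', h⟩) := by
          apply Finset.sum_congr rfl
          intro y' hy'
          have : y' ≠ v := (H.ne_of_adj (mem_filter.mp hy').2).symm
          rw [hFnon x y' this, dif_neg this]
        have e2 : ∑ x' ∈ univ.filter (fun x' => G.Adj x x'), F (x', v)
            = ∑ x' ∈ univ.filter (fun x' => G.Adj x x'), r x' := by
          apply Finset.sum_congr rfl
          intro x' _
          exact hFroot x'
        rw [e1, e2]
        exact hroot x h0
      · rw [nbrSum_nonroot G H v F x y hyv]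
        rw [hFnon x y hyv] at h0
        have h2 := hg.2 ⟨y, hyv⟩ h0
        rw [del_nbrSum H v (fun y' => F (x, y')) ⟨y, hyv⟩] at *
        have e3 : ∑ b ∈ univ.filter (fun b => (deleteVertex H v).Adj ⟨y, hyv⟩ b), F (x, b.1)
            = ∑ b ∈ univ.filter (fun b => (deleteVertex H v).Adj ⟨y, hyv⟩ b), g b := by
          apply Finset.sum_congr rfl
          intro b _
          rw [hFnon x b.1 b.2]
        rw [e3]
        omega
  calc italianNumber (rootedProd G H v) ≤ ∑ p, F p := italianNumber_le _ hIDF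
  _ = ∑ x, copyWeight F x := total_weight F
  _ = ∑ x : α, ((r x) + ∑ b, g b) := by
      apply Finset.sum_congr rfl
      intro x _
      exact sum_dite_v v (r x) g
  _ = Fintype.card α * (∑ b, g b) + ∑ x, r x := by
      rw [Finset.sum_add_distrib, Finset.sum_const, Finset.card_univ, smul_eq_mul, add_comm]
end Constr

section Constr2
variable {α β : Type*} [Fintype α] [Fintype β] (G : SimpleGraph α) (H : SimpleGraph β) (v : β)

/-- Mixed construction: h on copies over a dominating set D (with h v = 2), g elsewhere. -/
lemma mixUB (h : β → ℕ) (hh : IsIDF H h) (hv2 : h v = 2)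
    (g : {w : β // w ≠ v} → ℕ) (hg : IsIDF (deleteVertex H v) g)
    (D : Finset α) (hD : IsDomSet G ↑D) :
    italianNumber (rootedProd G H v) ≤
      D.card * (∑ y, h y) + (Fintype.card α - D.card) * (∑ b, g b) := by
  classical
  set F : α × β → ℕ := fun p =>
    if p.1 ∈ D then h p.2 else (if hy : p.2 = v then 0 else g ⟨p.2, hy⟩) with hFdef
  have hFD : ∀ x ∈ D, ∀ y, F (x, y) = h y := fun x hx y => if_pos hx
  have hFnD : ∀ (x : α), x ∉ D → ∀ (y : β) (hy : y ≠ v), F (x, y) = g ⟨y, hy⟩ := by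
    intro x hx y hy
    show (if x ∈ D then h y else _) = _
    rw [if_neg hx, dif_neg hy]
  have hFnDv : ∀ (x : α), x ∉ D → F (x, v) = 0 := by
    intro x hx
    show (if x ∈ D then h v else _) = 0
    rw [if_neg hx, dif_pos rfl]
  have hIDF : IsIDF (rootedProd G H v) F := by
    constructor
    · rintro ⟨x, y⟩
      by_cases hx : x ∈ D
      · rw [hFD x hx y]; exact hh.1 y
      · by_cases hy : y = v
        · rw [hy, hFnDv x hx]; omega
        · rw [hFnD x hx y hy]; exact hg.1 _
    · rintro ⟨x, y⟩ h0
      by_cases hx : x ∈ D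
      · rw [hFD x hx y] at h0
        have h2 := hh.2 y h0
        by_cases hy : y = v
        · rw [hy, hv2] at h0; omega
        · rw [nbrSum_nonroot G H v F x y hy]
          calc (2:ℕ) ≤ ∑ y' ∈ univ.filter (fun y' => H.Adj y y'), h y' := h2
          _ = ∑ y' ∈ univ.filter (fun y' => H.Adj y y'), F (x, y') := by
              apply Finset.sum_congr rfl
              intro y' _
              exact (hFD x hx y').symm
      · by_cases hy : y = v
        · -- root outside D : dominated externally
          rw [hy] at h0 ⊢
          rw [nbrSum_root]
          obtain ⟨x', hx'D, hadj⟩ := hD x hx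
          have hx'mem : x' ∈ univ.filter (fun x' => G.Adj x x') := by simp [hadj]
          have : F (x', v) = 2 := by rw [hFD x' hx'D v, hv2]
          have hle : 2 ≤ ∑ x' ∈ univ.filter (fun x' => G.Adj x x'), F (x', v) := by
            calc (2:ℕ) = F (x', v) := this.symm
            _ ≤ _ := Finset.single_le_sum (f := fun x' => F (x', v)) (fun i _ => Nat.zero_le _) hx'mem
          omega
        · rw [hFnD x hx y hy] at h0
          rw [nbrSum_nonroot G H v F x y hy]
          have h2 := hg.2 ⟨y, hy⟩ h0
          rw [del_nbrSum H v (fun y' => F (x, y')) ⟨y, hy⟩]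
          have e3 : ∑ b ∈ univ.filter (fun b => (deleteVertex H v).Adj ⟨y, hy⟩ b), F (x, b.1)
              = ∑ b ∈ univ.filter (fun b => (deleteVertex H v).Adj ⟨y, hy⟩ b), g b := by
            apply Finset.sum_congr rfl
            intro b _
            exact hFnD x hx b.1 b.2
          rw [e3, hFnDv x hx]
          omega
  calc italianNumber (rootedProd G H v) ≤ ∑ p, F p := italianNumber_le _ hIDF
  _ = ∑ x, copyWeight F x := total_weight F
  _ = ∑ x ∈ D, copyWeight F x + ∑ x ∈ univ \ D, copyWeight F x := by
      rw [← Finset.sum_sdiff (subset_univ D), add_comm]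
  _ = D.card * (∑ y, h y) + (Fintype.card α - D.card) * (∑ b, g b) := by
      congr 1
      · rw [Finset.sum_congr rfl (fun x hx => ?_), Finset.sum_const, smul_eq_mul]
        show copyWeight F x = ∑ y, h y
        exact Finset.sum_congr rfl (fun y _ => hFD x hx y)
      · rw [Finset.sum_congr rfl (fun x hx => ?_), Finset.sum_const, smul_eq_mul,
          Finset.card_sdiff_of_subset (subset_univ D), Finset.card_univ]
        show copyWeight F x = ∑ b, g b
        have hx' : x ∉ D := (Finset.mem_sdiff.mp hx).2
        calc copyWeight F x = ∑ y : β, (if hy : y = v then 0 else g ⟨y, hy⟩) := by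
              apply Finset.sum_congr rfl
              intro y _
              by_cases hy : y = v
              · rw [hy, hFnDv x hx', dif_pos rfl]
              · rw [hFnD x hx' y hy, dif_neg hy]
        _ = ∑ b, g b := by rw [sum_dite_v, zero_add]
end Constr2

section Copy
variable {α β : Type*} [Fintype α] [Fintype β] (G : SimpleGraph α) (H : SimpleGraph β) (v : β)

lemma restrict_IDF_H (f : α × β → ℕ) (hf : IsIDF (rootedProd G H v) f) (x : α)
    (hroot : f (x, v) = 0 → 2 ≤ ∑ y' ∈ univ.filter (fun y' => H.Adj v y'), f (x, y')) :
    IsIDF H (fun y => f (x, y)) := by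
  constructor
  · intro y; exact hf.1 (x, y)
  · intro y h0
    by_cases hy : y = v
    · rw [hy] at h0 ⊢; exact hroot h0
    · have h2 := hf.2 (x, y) h0
      rw [nbrSum_nonroot G H v f x y hy] at h2
      exact h2

lemma restrict_IDF_del (f : α × β → ℕ) (hf : IsIDF (rootedProd G H v) f) (x : α)
    (h0 : f (x, v) = 0) :
    IsIDF (deleteVertex H v) (fun b => f (x, b.1)) := by
  constructor
  · intro b; exact hf.1 (x, b.1)
  · intro b hb
    have h2 := hf.2 (x, b.1) hb
    rw [nbrSum_nonroot G H v f x b.1 b.2,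
      del_nbrSum H v (fun y' => f (x, y')) b, h0] at h2
    simpa using h2

lemma copy_cases (f : α × β → ℕ) (hf : IsIDF (rootedProd G H v) f) (x : α)
    (hlt : copyWeight f x < italianNumber H) :
    f (x, v) = 0 ∧
    IsIDF (deleteVertex H v) (fun b => f (x, b.1)) ∧
    (∑ b : {w : β // w ≠ v}, f (x, b.1)) = copyWeight f x ∧
    2 ≤ (∑ y' ∈ univ.filter (fun y' => H.Adj v y'), f (x, y'))
        + ∑ x' ∈ univ.filter (fun x' => G.Adj x x'), f (x', v) := by
  have hv0 : f (x, v) = 0 := by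
    by_contra hne
    have : IsIDF H (fun y => f (x, y)) := restrict_IDF_H G H v f hf x (fun h => absurd h hne)
    exact absurd (italianNumber_le H this) (by rw [copyWeight] at hlt; omega)
  have hint : ¬ (2 ≤ ∑ y' ∈ univ.filter (fun y' => H.Adj v y'), f (x, y')) := by
    intro h2
    have : IsIDF H (fun y => f (x, y)) := restrict_IDF_H G H v f hf x (fun _ => h2)
    exact absurd (italianNumber_le H this) (by rw [copyWeight] at hlt; omega)
  refine ⟨hv0, restrict_IDF_del G H v f hf x hv0, ?_, ?_⟩
  · exact del_weight' v (fun y => f (x, y)) hv0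
  · have h2 := hf.2 (x, v) hv0
    rw [nbrSum_root G H v f x] at h2
    exact h2

/-- Every copy weighs at least min(γ_I(H), γ_I(H−v)). -/
lemma copy_lb (f : α × β → ℕ) (hf : IsIDF (rootedProd G H v) f) (x : α) :
    min (italianNumber H) (italianNumber (deleteVertex H v)) ≤ copyWeight f x := by
  by_cases h : italianNumber H ≤ copyWeight f x
  · omega
  · obtain ⟨-, hIDF, hw, -⟩ := copy_cases G H v f hf x (by omega)
    have := italianNumber_le (deleteVertex H v) hIDF
    omega
end Copy

section Lower
variable {α β : Type*} [Fintype α] [Fintype β] (G : SimpleGraph α) (H : SimpleGraph β) (v : β)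

lemma lower_easy (hge : italianNumber H ≤ italianNumber (deleteVertex H v)) :
    Fintype.card α * italianNumber H ≤ italianNumber (rootedProd G H v) := by
  refine le_italianNumber _ fun f hf => ?_
  rw [total_weight]
  calc Fintype.card α * italianNumber H = ∑ _x : α, italianNumber H := by
        rw [Finset.sum_const, Finset.card_univ, smul_eq_mul]
  _ ≤ ∑ x, copyWeight f x := by
      apply Finset.sum_le_sum
      intro x _
      have := copy_lb G H v f hf x
      omega

lemma lower_main [Nonempty α]
    (hd : italianNumber (deleteVertex H v) = italianNumber H - 1)
    (hi : ∀ g : {w : β // w ≠ v} → ℕ, IsMinIDF (deleteVertex H v) g →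
      ∀ y : β, ∀ hy : H.Adj v y, g ⟨y, (H.ne_of_adj hy).symm⟩ = 0)
    (hii : ∀ h : β → ℕ, IsMinIDF H h → h v ≠ 2) :
    Fintype.card α * (italianNumber H - 1) + italianNumber G ≤
      italianNumber (rootedProd G H v) := by
  have : Nonempty β := ⟨v⟩
  set γI := italianNumber H with hγIdef
  have hγI : 1 ≤ γI := one_le_italianNumber H
  refine le_italianNumber _ fun f hf => ?_
  set w : α → ℕ := fun x => min (copyWeight f x - (γI - 1)) 2 with hwdef
  have claim1 : ∀ x, γI - 1 ≤ copyWeight f x := by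
    intro x
    have := copy_lb G H v f hf x
    omega
  have claim2 : ∀ x, f (x, v) ≤ w x := by
    intro x
    rcases Nat.eq_zero_or_pos (f (x, v)) with h0 | hpos
    · omega
    · have hIDF : IsIDF H (fun y => f (x, y)) :=
        restrict_IDF_H G H v f hf x (fun h => absurd h (by omega))
      have hge : γI ≤ copyWeight f x := italianNumber_le H hIDF
      have hle2 : f (x, v) ≤ 2 := hf.1 (x, v)
      rcases Nat.lt_or_ge (f (x, v)) 2 with h1 | h2
      · simp only [hwdef]; omega
      · -- f (x,v) = 2 : weight must exceed γI
        have hfxv : f (x, v) = 2 := by omega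
        have hgt : γI + 1 ≤ copyWeight f x := by
          rcases Nat.lt_or_ge γI (copyWeight f x) with h | h
          · omega
          · exfalso
            have hmin : IsMinIDF H (fun y => f (x, y)) := by
              refine ⟨hIDF, ?_⟩
              have hcw : (∑ u : β, (fun y => f (x, y)) u) = copyWeight f x := rfl
              omega
            exact hii _ hmin hfxv
        simp only [hwdef]; omega
  have claim3 : IsIDF G w := by
    constructor
    · intro x; simp only [hwdef]; omega
    · intro x h0
      have hω : copyWeight f x = γI - 1 := by
        have := claim1 x
        simp only [hwdef] at h0
        omega
      obtain ⟨hv0, hIDF, hwt, hroot⟩ := copy_cases G H v f hf x (by omega)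
      have hminIDF : IsMinIDF (deleteVertex H v) (fun b => f (x, b.1)) :=
        ⟨hIDF, by rw [hd, ← hω, hwt]⟩
      have hint : (∑ y' ∈ univ.filter (fun y' => H.Adj v y'), f (x, y')) = 0 := by
        apply Finset.sum_eq_zero
        intro y' hy'
        have hadj : H.Adj v y' := (mem_filter.mp hy').2
        exact hi _ hminIDF y' hadj
      rw [hint, zero_add] at hroot
      calc (2:ℕ) ≤ ∑ x' ∈ univ.filter (fun x' => G.Adj x x'), f (x', v) := hroot
      _ ≤ ∑ x' ∈ univ.filter (fun x' => G.Adj x x'), w x' :=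
          Finset.sum_le_sum fun x' _ => claim2 x'
  have hwG : italianNumber G ≤ ∑ x, w x := italianNumber_le G claim3
  rw [total_weight]
  calc Fintype.card α * (γI - 1) + italianNumber G
      ≤ (∑ _x : α, (γI - 1)) + ∑ x, w x := by
        rw [Finset.sum_const, Finset.card_univ, smul_eq_mul]
        omega
  _ = ∑ x, ((γI - 1) + w x) := (Finset.sum_add_distrib).symm
  _ ≤ ∑ x, copyWeight f x := by
      apply Finset.sum_le_sum
      intro x _
      have h1 := claim1 x
      simp only [hwdef]
      omega
end Lower

section CardBound
variable {α : Type*} [Fintype α]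

lemma italian_add_one_le_card (G : SimpleGraph α) (hG : ∃ u : α, 2 ≤ deg G u) :
    italianNumber G + 1 ≤ Fintype.card α := by
  classical
  obtain ⟨u, hu⟩ := hG
  rw [deg] at hu
  obtain ⟨a, ha, b, hb, hab⟩ := Finset.one_lt_card.mp
    (show 1 < (univ.filter (fun w => G.Adj u w)).card by omega)
  rw [mem_filter] at ha hb
  have hua : G.Adj u a := ha.2
  have hub : G.Adj u b := hb.2
  set f : α → ℕ := fun w => if w = a ∨ w = b then 0 else if w = u then 2 else 1 with hfdef
  have hune : ¬(u = a ∨ u = b) := by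
    push_neg
    exact ⟨fun h => G.loopless.irrefl u (h ▸ hua), fun h => G.loopless.irrefl u (h ▸ hub)⟩
  have hfu : f u = 2 := by simp [hfdef, hune]
  have hIDF : IsIDF G f := by
    constructor
    · intro w; simp only [hfdef]; split_ifs <;> omega
    · intro w hw
      have hwab : w = a ∨ w = b := by
        by_contra hc
        simp only [hfdef, if_neg hc] at hw
        split_ifs at hw <;> simp_all
      have hadj : G.Adj w u := by
        rcases hwab with rfl | rfl
        · exact hua.symm
        · exact hub.symm
      calc (2:ℕ) = f u := hfu.symm
      _ ≤ ∑ w' ∈ univ.filter (fun w' => G.Adj w w'), f w' :=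
          Finset.single_le_sum (fun i _ => Nat.zero_le _) (by simp [hadj])
  have hwle : ∑ w, f w + 1 ≤ Fintype.card α := by
    have hsub : ({a, b} : Finset α) ⊆ univ := subset_univ _
    have hsplit : ∑ w, f w = ∑ w ∈ univ \ {a, b}, f w + ∑ w ∈ ({a,b}:Finset α), f w :=
      (Finset.sum_sdiff hsub).symm
    have hab0 : ∑ w ∈ ({a,b}:Finset α), f w = 0 := by
      apply Finset.sum_eq_zero
      intro w hw
      simp only [mem_insert, mem_singleton] at hw
      simp [hfdef, hw]
    have hle : ∑ w ∈ univ \ {a, b}, f w ≤ ∑ w ∈ univ \ {a,b}, (if w = u then 2 else 1) := by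
      apply Finset.sum_le_sum
      intro w _
      simp only [hfdef]
      split_ifs <;> omega
    have hu' : u ∈ univ \ ({a,b}:Finset α) := by simpa using hune
    have h2 : ∑ w ∈ univ \ {a,b}, (if w = u then (2:ℕ) else 1) =
        (univ \ ({a,b}:Finset α)).card + 1 := by
      have he : ∀ w, (if w = u then (2:ℕ) else 1) = 1 + (if w = u then 1 else 0) := by
        intro w; split_ifs <;> rfl
      simp_rw [he]
      rw [Finset.sum_add_distrib, Finset.sum_const,
        Finset.sum_ite_eq' (univ \ {a,b}) u (fun _ => 1), if_pos hu']
      simp [mul_comm]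
    have hcard : (univ \ ({a,b}:Finset α)).card = Fintype.card α - 2 := by
      rw [Finset.card_sdiff_of_subset hsub, Finset.card_insert_of_notMem (by simpa using hab),
        Finset.card_singleton]
      rfl
    have hn2 : 2 ≤ Fintype.card α := by
      calc 2 = ({a,b}:Finset α).card := by
            rw [Finset.card_insert_of_notMem (by simpa using hab), Finset.card_singleton]
      _ ≤ _ := by simpa using Finset.card_le_card hsub
    omega
  have := italianNumber_le G hIDF
  omega
end CardBound

/-- Theorem: for G of maximum degree at least 2 with γ(G) < γ_I(G),
γ_I(G∘_v H) = n(G)(γ_I(H)−1)+γ_I(G) iff γ_I(H−{v}) = γ_I(H)−1 and both: (i) every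
γ_I(H−{v})-function g satisfies g(y) = 0 for every neighbour y of v in H, and
(ii) every γ_I(H)-function h satisfies h(v) ≠ 2. -/
theorem stmt18 {α β : Type*} [Fintype α] [Nonempty α] [Fintype β]
    (G : SimpleGraph α) (hG : ∃ u : α, 2 ≤ deg G u)
    (hGI : dominationNumber G < italianNumber G)
    (H : SimpleGraph β) (v : β) :
    italianNumber (rootedProd G H v) =
        Fintype.card α * (italianNumber H - 1) + italianNumber G ↔
      (italianNumber (deleteVertex H v) = italianNumber H - 1 ∧
        (∀ g : {w : β // w ≠ v} → ℕ, IsMinIDF (deleteVertex H v) g →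
          ∀ y : β, ∀ hy : H.Adj v y, g ⟨y, (H.ne_of_adj hy).symm⟩ = 0) ∧
        (∀ h : β → ℕ, IsMinIDF H h → h v ≠ 2)) := by
  classical
  have hβ : Nonempty β := ⟨v⟩
  have hn1 : 1 ≤ Fintype.card α := Fintype.card_pos
  have hγI : 1 ≤ italianNumber H := one_le_italianNumber H
  have hγIG1 : 1 ≤ italianNumber G := one_le_italianNumber G
  have hcard : italianNumber G + 1 ≤ Fintype.card α := italian_add_one_le_card G hG
  obtain ⟨fG, hfG⟩ := exists_minIDF G
  obtain ⟨D, hD, hDcard⟩ := exists_minDom G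
  have hDn : D.card ≤ Fintype.card α := by
    simpa using Finset.card_le_card (subset_univ D)
  have hub : ∀ g : {w : β // w ≠ v} → ℕ, IsIDF (deleteVertex H v) g →
      italianNumber (rootedProd G H v) ≤
        Fintype.card α * (∑ b, g b) + italianNumber G := by
    intro g hg
    have := genUB G H v g hg fG hfG.1.1 (fun x h0 => le_add_left (hfG.1.2 x h0))
    rwa [hfG.2] at this
  obtain ⟨g0, hg0⟩ := exists_minIDF (deleteVertex H v)
  have hub0 : italianNumber (rootedProd G H v) ≤
      Fintype.card α * italianNumber (deleteVertex H v) + italianNumber G := by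
    have := hub g0 hg0.1
    rwa [hg0.2] at this
  constructor
  · intro hEq
    have ha : italianNumber (deleteVertex H v) = italianNumber H - 1 := by
      rcases le_or_gt (italianNumber H) (italianNumber (deleteVertex H v)) with hge | hlt
      · exfalso
        have hl := lower_easy G H v hge
        rw [hEq] at hl
        obtain ⟨k, hk⟩ : ∃ k, italianNumber H = k + 1 := ⟨italianNumber H - 1, by omega⟩
        rw [hk, Nat.mul_add, Nat.mul_one, Nat.add_sub_cancel] at hl
        omega
      · by_contra hne
        have hlt' : italianNumber (deleteVertex H v) < italianNumber H - 1 := by omega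
        have hmul : Fintype.card α * italianNumber (deleteVertex H v) <
            Fintype.card α * (italianNumber H - 1) :=
          mul_lt_mul_of_pos_left hlt' (by omega : 0 < Fintype.card α)
        omega
    refine ⟨ha, ?_, ?_⟩
    · intro g hg y hy
      by_contra hne
      have hg1 : 1 ≤ g ⟨y, (H.ne_of_adj hy).symm⟩ := Nat.one_le_iff_ne_zero.mpr hne
      set r : α → ℕ := fun x => if x ∈ D then 1 else 0 with hrdef
      have hr2 : ∀ x, r x ≤ 2 := by intro x; simp only [hrdef]; split_ifs <;> omega
      have hS : 1 ≤ ∑ y' ∈ univ.filter (fun y' => H.Adj v y'),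
          (if h : y' = v then 0 else g ⟨y', h⟩) := by
        have hymem : y ∈ univ.filter (fun y' => H.Adj v y') := by simp [hy]
        calc (1:ℕ) ≤ g ⟨y, (H.ne_of_adj hy).symm⟩ := hg1
        _ = (if h : y = v then 0 else g ⟨y, h⟩) := by rw [dif_neg (H.ne_of_adj hy).symm]
        _ ≤ _ := Finset.single_le_sum
            (f := fun y' => if h : y' = v then 0 else g ⟨y', h⟩)
            (fun i _ => Nat.zero_le _) hymem
      have hroot : ∀ x, r x = 0 →
          2 ≤ (∑ y' ∈ univ.filter (fun y' => H.Adj v y'),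
                (if h : y' = v then 0 else g ⟨y', h⟩))
              + ∑ x' ∈ univ.filter (fun x' => G.Adj x x'), r x' := by
        intro x h0
        have hxD : x ∉ D := by
          intro hx
          rw [hrdef] at h0
          simp [hx] at h0
        obtain ⟨x', hx'D, hadj⟩ := hD x hxD
        have hx'mem : x' ∈ univ.filter (fun x' => G.Adj x x') := by simp [hadj]
        have hr1 : 1 ≤ ∑ x' ∈ univ.filter (fun x' => G.Adj x x'), r x' := by
          calc (1:ℕ) = r x' := by
                have hx'D' : x' ∈ D := hx'D
                simp [hrdef, hx'D']
          _ ≤ _ := Finset.single_le_sum (f := r) (fun i _ => Nat.zero_le _) hx'mem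
        omega
      have hr_sum : ∑ x, r x = D.card := by
        simp only [hrdef]
        rw [Finset.sum_ite_mem, Finset.univ_inter, Finset.sum_const, smul_eq_mul, mul_one]
      have hUB2 := genUB G H v g hg.1 r hr2 hroot
      rw [hg.2, ha, hr_sum] at hUB2
      omega
    · intro h hh hv2
      have hUB3 := mixUB G H v h hh.1 hv2 g0 hg0.1 D hD
      rw [hh.2, hg0.2, ha] at hUB3
      obtain ⟨k, hk⟩ : ∃ k, italianNumber H = k + 1 := ⟨italianNumber H - 1, by omega⟩
      rw [hk, Nat.add_sub_cancel] at hUB3 hEq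
      rw [Nat.mul_add, Nat.mul_one, Nat.sub_mul] at hUB3
      have hABle : D.card * k ≤ Fintype.card α * k := Nat.mul_le_mul_right k hDn
      omega
  · rintro ⟨ha, hi, hii⟩
    apply le_antisymm
    · rw [ha] at hub0
      exact hub0
    · exact lower_main G H v ha hi hii
end
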